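/- Let 𝒴 ⊂ ℝ be a finite set, let 𝒜, 𝒰, 𝒱 be finite types, let p be a strictly positive probability mass function on 𝒴 × 𝒜 × 𝒰 × 𝒱, and fix a ∈ 𝒜. Let S : 𝒴 × 𝒜 × 𝒰 × 𝒱 → ℝ satisfy ∑_o p(o)·S(o) = 0, and for real t set p_t(o) := p(o)·(1 + t·S(o)). Then there is ε > 0 such that for all |t| < ε, p_t is a strictly positive probability mass function, and the map t ↦ T_a(p_t) is differentiable at t = 0 with derivative ∑_o p(o)·ψ_a(o)·S(o), where T_a(p_t) is the target parameter computed from p_t and ψ_a is the influence function computed from p. -/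

import Mathlib

open Finset

set_option linter.unusedSectionVars false
set_option maxHeartbeats 1000000

noncomputable section

variable {Y : Finset ℝ} {A U V : Type}
variable [Fintype A] [Fintype U] [Fintype V] [DecidableEq A]

/-- Marginal of a pmf `q` on the mediator part `U`. -/
def pU (q : Y × A × U × V → ℝ) (u : U) : ℝ :=
  ∑ y : Y, ∑ a : A, ∑ v : V, q (y, a, u, v)

/-- Marginal of a pmf `q` on the non-mediator part `V`. -/
def pV (q : Y × A × U × V → ℝ) (v : V) : ℝ :=
  ∑ y : Y, ∑ a : A, ∑ u : U, q (y, a, u, v)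

/-- Joint marginal of a pmf `q` on `(A, U, V)`. -/
def pAUV (q : Y × A × U × V → ℝ) (a : A) (u : U) (v : V) : ℝ :=
  ∑ y : Y, q (y, a, u, v)

/-- Outcome regression `m^q(u,v) = ∑_y y · q(y | a, u, v)`. -/
def mReg (q : Y × A × U × V → ℝ) (a : A) (u : U) (v : V) : ℝ :=
  ∑ y : Y, (y : ℝ) * (q (y, a, u, v) / pAUV q a u v)

/-- Target parameter `T_a(q) = ∑_u q(u) ∑_v q(v) m^q(u,v)`. -/
def Ta (q : Y × A × U × V → ℝ) (a : A) : ℝ :=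
  ∑ u : U, pU q u * ∑ v : V, pV q v * mReg q a u v

/-- Influence function of the adjusted functional for the WCDE,
computed from the base distribution `p`. -/
def psi (p : Y × A × U × V → ℝ) (a : A) : Y × A × U × V → ℝ :=
  fun (y, a', u, v) =>
    (if a' = a then (1 : ℝ) else 0) * (pU p u * pV p v / pAUV p a u v) *
        ((y : ℝ) - mReg p a u v)
      + (∑ v' : V, pV p v' * mReg p a u v')
      + (∑ u' : U, pU p u' * mReg p a u' v)
      - 2 * Ta p a

/-- Numerator of the outcome regression: `∑_y y · q(y,a,u,v)`. -/
def nm (q : Y × A × U × V → ℝ) (a : A) (u : U) (v : V) : ℝ :=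
  ∑ y : Y, (y : ℝ) * q (y, a, u, v)

lemma mReg_eq (q : Y × A × U × V → ℝ) (a : A) (u : U) (v : V) :
    mReg q a u v = nm q a u v / pAUV q a u v := by
  simp [mReg, nm, Finset.sum_div, mul_div_assoc]

lemma pU_lin (p S : Y × A × U × V → ℝ) (t : ℝ) (u : U) :
    pU (fun o => p o * (1 + t * S o)) u = pU p u + t * pU (fun o => p o * S o) u := by
  simp only [pU, Finset.mul_sum, ← Finset.sum_add_distrib]
  exact Finset.sum_congr rfl fun _ _ => Finset.sum_congr rfl fun _ _ =>
    Finset.sum_congr rfl fun _ _ => by ring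

lemma pV_lin (p S : Y × A × U × V → ℝ) (t : ℝ) (v : V) :
    pV (fun o => p o * (1 + t * S o)) v = pV p v + t * pV (fun o => p o * S o) v := by
  simp only [pV, Finset.mul_sum, ← Finset.sum_add_distrib]
  exact Finset.sum_congr rfl fun _ _ => Finset.sum_congr rfl fun _ _ =>
    Finset.sum_congr rfl fun _ _ => by ring

lemma pAUV_lin (p S : Y × A × U × V → ℝ) (t : ℝ) (a : A) (u : U) (v : V) :
    pAUV (fun o => p o * (1 + t * S o)) a u v
      = pAUV p a u v + t * pAUV (fun o => p o * S o) a u v := by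
  simp only [pAUV, Finset.mul_sum, ← Finset.sum_add_distrib]
  exact Finset.sum_congr rfl fun _ _ => by ring

lemma nm_lin (p S : Y × A × U × V → ℝ) (t : ℝ) (a : A) (u : U) (v : V) :
    nm (fun o => p o * (1 + t * S o)) a u v
      = nm p a u v + t * nm (fun o => p o * S o) a u v := by
  simp only [nm, Finset.mul_sum, ← Finset.sum_add_distrib]
  exact Finset.sum_congr rfl fun _ _ => by ring

lemma sum_rot3 {α β γ : Type} [Fintype α] [Fintype β] [Fintype γ] (f : α → β → γ → ℝ) :
    ∑ x : α, ∑ y : β, ∑ z : γ, f x y z = ∑ z : γ, ∑ x : α, ∑ y : β, f x y z := by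
  calc ∑ x : α, ∑ y : β, ∑ z : γ, f x y z
      = ∑ x : α, ∑ z : γ, ∑ y : β, f x y z :=
        Finset.sum_congr rfl fun _ _ => Finset.sum_comm
    _ = ∑ z : γ, ∑ x : α, ∑ y : β, f x y z := Finset.sum_comm

lemma sum_rot3' {α β γ : Type} [Fintype α] [Fintype β] [Fintype γ] (f : α → β → γ → ℝ) :
    ∑ x : α, ∑ y : β, ∑ z : γ, f x y z = ∑ y : β, ∑ z : γ, ∑ x : α, f x y z := by
  calc ∑ x : α, ∑ y : β, ∑ z : γ, f x y z
      = ∑ y : β, ∑ x : α, ∑ z : γ, f x y z := Finset.sum_comm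
    _ = ∑ y : β, ∑ z : γ, ∑ x : α, f x y z :=
        Finset.sum_congr rfl fun _ _ => Finset.sum_comm

/-- Derivative of the product-of-affine-and-quotient expression. -/
lemma hasDerivAt_F {U V : Type} [Fintype U] [Fintype V]
    (PU dPU : U → ℝ) (PV dPV : V → ℝ) (NM dNM DN dDN : U → V → ℝ)
    (hDN : ∀ u v, DN u v ≠ 0) :
    HasDerivAt (fun t : ℝ => ∑ u : U, (PU u + t * dPU u) * ∑ v : V, (PV v + t * dPV v) *
        ((NM u v + t * dNM u v) / (DN u v + t * dDN u v)))
      (∑ u : U, (dPU u * ∑ v : V, PV v * (NM u v / DN u v)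
        + PU u * ∑ v : V, (dPV v * (NM u v / DN u v)
            + PV v * ((dNM u v * DN u v - NM u v * dDN u v) / DN u v ^ 2)))) 0 := by
  apply HasDerivAt.fun_sum
  intro u _
  have hU : HasDerivAt (fun t : ℝ => PU u + t * dPU u) (dPU u) 0 := by
    simpa using ((hasDerivAt_id (0:ℝ)).mul_const (dPU u)).const_add (PU u)
  have hv : HasDerivAt (fun t : ℝ => ∑ v : V, (PV v + t * dPV v) *
      ((NM u v + t * dNM u v) / (DN u v + t * dDN u v)))
      (∑ v : V, (dPV v * (NM u v / DN u v)
          + PV v * ((dNM u v * DN u v - NM u v * dDN u v) / DN u v ^ 2))) 0 := by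
    apply HasDerivAt.fun_sum
    intro v _
    have hV : HasDerivAt (fun t : ℝ => PV v + t * dPV v) (dPV v) 0 := by
      simpa using ((hasDerivAt_id (0:ℝ)).mul_const (dPV v)).const_add (PV v)
    have hN : HasDerivAt (fun t : ℝ => NM u v + t * dNM u v) (dNM u v) 0 := by
      simpa using ((hasDerivAt_id (0:ℝ)).mul_const (dNM u v)).const_add (NM u v)
    have hD : HasDerivAt (fun t : ℝ => DN u v + t * dDN u v) (dDN u v) 0 := by
      simpa using ((hasDerivAt_id (0:ℝ)).mul_const (dDN u v)).const_add (DN u v)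
    have hQ := hN.fun_div hD (by simpa using hDN u v)
    have := hV.fun_mul hQ
    simpa using this
  have := hU.fun_mul hv
  simpa using this

/-- The pathwise-derivative expression equals the inner product of the
influence function with the score. -/
lemma deriv_identity (p S : Y × A × U × V → ℝ) (a : A)
    (hDN : ∀ u v, pAUV p a u v ≠ 0) (hS : ∑ o, p o * S o = 0) :
    ∑ o, p o * psi p a o * S o
      = ∑ u : U, (pU (fun o => p o * S o) u *
            ∑ v : V, pV p v * (nm p a u v / pAUV p a u v)
          + pU p u * ∑ v : V, (pV (fun o => p o * S o) v *
                (nm p a u v / pAUV p a u v)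
              + pV p v * ((nm (fun o => p o * S o) a u v * pAUV p a u v
                  - nm p a u v * pAUV (fun o => p o * S o) a u v)
                    / pAUV p a u v ^ 2))) := by
  have h0 : ∀ (y : Y) (b : A) (u : U) (v : V),
      p (y, b, u, v) * psi p a (y, b, u, v) * S (y, b, u, v)
        = (if b = a then (p (y, b, u, v) * S (y, b, u, v)) *
              (pU p u * pV p v / pAUV p a u v *
                ((y : ℝ) - nm p a u v / pAUV p a u v)) else 0)
          + (p (y, b, u, v) * S (y, b, u, v)) *
              (∑ v' : V, pV p v' * (nm p a u v' / pAUV p a u v'))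
          + (p (y, b, u, v) * S (y, b, u, v)) *
              (∑ u' : U, pU p u' * (nm p a u' v / pAUV p a u' v))
          - (p (y, b, u, v) * S (y, b, u, v)) * (2 * Ta p a) := by
    intro y b u v
    simp only [psi, mReg_eq]
    split <;> ring
  have hLHS : ∑ o, p o * psi p a o * S o
      = ∑ y : Y, ∑ b : A, ∑ u : U, ∑ v : V,
          p (y, b, u, v) * psi p a (y, b, u, v) * S (y, b, u, v) := by
    simp only [Fintype.sum_prod_type]
  rw [hLHS]
  simp only [h0, Finset.sum_add_distrib, Finset.sum_sub_distrib]
  have h4 : (∑ y : Y, ∑ b : A, ∑ u : U, ∑ v : V,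
      (p (y, b, u, v) * S (y, b, u, v)) * (2 * Ta p a))
      = (∑ o : Y × A × U × V, p o * S o) * (2 * Ta p a) := by
    simp only [← Finset.sum_mul, Fintype.sum_prod_type]
  rw [h4, hS, zero_mul, sub_zero]
  have h1 : (∑ y : Y, ∑ b : A, ∑ u : U, ∑ v : V,
      if b = a then (p (y, b, u, v) * S (y, b, u, v)) *
        (pU p u * pV p v / pAUV p a u v *
          ((y : ℝ) - nm p a u v / pAUV p a u v)) else 0)
      = ∑ u : U, pU p u * ∑ v : V, pV p v *
          ((nm (fun o => p o * S o) a u v * pAUV p a u v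
            - nm p a u v * pAUV (fun o => p o * S o) a u v) / pAUV p a u v ^ 2) := by
    have collapse : ∀ y : Y, (∑ b : A, ∑ u : U, ∑ v : V,
        if b = a then (p (y, b, u, v) * S (y, b, u, v)) *
          (pU p u * pV p v / pAUV p a u v *
            ((y : ℝ) - nm p a u v / pAUV p a u v)) else 0)
        = ∑ u : U, ∑ v : V, (p (y, a, u, v) * S (y, a, u, v)) *
            (pU p u * pV p v / pAUV p a u v *
              ((y : ℝ) - nm p a u v / pAUV p a u v)) := by
      intro y
      rw [Finset.sum_eq_single_of_mem a (Finset.mem_univ a)]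
      · simp
      · intro b _ hb
        simp [hb]
    rw [Finset.sum_congr rfl fun y _ => collapse y, sum_rot3']
    refine Finset.sum_congr rfl fun u _ => ?_
    rw [Finset.mul_sum]
    refine Finset.sum_congr rfl fun v _ => ?_
    have e1 : ∀ y : Y, (p (y, a, u, v) * S (y, a, u, v)) *
        (pU p u * pV p v / pAUV p a u v *
          ((y : ℝ) - nm p a u v / pAUV p a u v))
        = (pU p u * pV p v / pAUV p a u v) *
            ((y : ℝ) * (p (y, a, u, v) * S (y, a, u, v)))
          - (pU p u * pV p v / pAUV p a u v * (nm p a u v / pAUV p a u v)) *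
              (p (y, a, u, v) * S (y, a, u, v)) := by
      intro y; ring
    rw [Finset.sum_congr rfl fun y _ => e1 y, Finset.sum_sub_distrib,
      ← Finset.mul_sum, ← Finset.mul_sum]
    have eN : (∑ y : Y, (y : ℝ) * (p (y, a, u, v) * S (y, a, u, v)))
        = nm (fun o => p o * S o) a u v := rfl
    have eD : (∑ y : Y, p (y, a, u, v) * S (y, a, u, v))
        = pAUV (fun o => p o * S o) a u v := rfl
    rw [eN, eD]
    have hd := hDN u v
    field_simp
  have h2 : (∑ y : Y, ∑ b : A, ∑ u : U, ∑ v : V,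
      (p (y, b, u, v) * S (y, b, u, v)) *
        (∑ v' : V, pV p v' * (nm p a u v' / pAUV p a u v')))
      = ∑ u : U, pU (fun o => p o * S o) u *
          ∑ v : V, pV p v * (nm p a u v / pAUV p a u v) := by
    rw [sum_rot3 (f := fun y b u => ∑ v : V, (p (y, b, u, v) * S (y, b, u, v)) *
      (∑ v' : V, pV p v' * (nm p a u v' / pAUV p a u v')))]
    refine Finset.sum_congr rfl fun u _ => ?_
    simp only [← Finset.sum_mul]
    rfl
  have h3 : (∑ y : Y, ∑ b : A, ∑ u : U, ∑ v : V,
      (p (y, b, u, v) * S (y, b, u, v)) *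
        (∑ u' : U, pU p u' * (nm p a u' v / pAUV p a u' v)))
      = ∑ u : U, pU p u *
          ∑ v : V, pV (fun o => p o * S o) v * (nm p a u v / pAUV p a u v) := by
    have step1 : (∑ y : Y, ∑ b : A, ∑ u : U, ∑ v : V,
        (p (y, b, u, v) * S (y, b, u, v)) *
          (∑ u' : U, pU p u' * (nm p a u' v / pAUV p a u' v)))
        = ∑ v : V, pV (fun o => p o * S o) v *
            (∑ u' : U, pU p u' * (nm p a u' v / pAUV p a u' v)) := by
      have inner : ∀ y : Y, (∑ b : A, ∑ u : U, ∑ v : V,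
          (p (y, b, u, v) * S (y, b, u, v)) *
            (∑ u' : U, pU p u' * (nm p a u' v / pAUV p a u' v)))
          = ∑ v : V, ∑ b : A, ∑ u : U,
            (p (y, b, u, v) * S (y, b, u, v)) *
              (∑ u' : U, pU p u' * (nm p a u' v / pAUV p a u' v)) := fun y =>
        sum_rot3 _
      rw [Finset.sum_congr rfl fun y _ => inner y, Finset.sum_comm]
      refine Finset.sum_congr rfl fun v _ => ?_
      simp only [← Finset.sum_mul]
      rfl
    rw [step1]
    simp only [Finset.mul_sum]
    rw [Finset.sum_comm]
    exact Finset.sum_congr rfl fun u _ => Finset.sum_congr rfl fun v _ => by ring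
  rw [h1, h2, h3]
  simp only [mul_add, Finset.sum_add_distrib]
  ring

/-- Pathwise differentiability of the WCDE functional along the
score-perturbed submodel `p_t = p · (1 + t·S)`:  for small `t` the
perturbation is a strictly positive pmf and the derivative of
`t ↦ T_a(p_t)` at `t = 0` equals `∑_o p(o)·ψ_a(o)·S(o)`. -/
theorem hasDerivAt_Ta_perturbed (p : Y × A × U × V → ℝ)
    (hpos : ∀ o, 0 < p o) (hsum : ∑ o, p o = 1) (a : A)
    (S : Y × A × U × V → ℝ) (hS : ∑ o, p o * S o = 0) :
    ∃ ε > (0 : ℝ),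
      (∀ t : ℝ, |t| < ε →
        (∀ o, 0 < p o * (1 + t * S o)) ∧
          ∑ o, p o * (1 + t * S o) = 1) ∧
      HasDerivAt (fun t : ℝ => Ta (fun o => p o * (1 + t * S o)) a)
        (∑ o, p o * psi p a o * S o) 0 := by
  rcases isEmpty_or_nonempty (Y × A × U × V) with hemp | hne
  · rw [Finset.univ_eq_empty, Finset.sum_empty] at hsum
    exact absurd hsum (by norm_num)
  obtain ⟨⟨y0, a0, u0, v0⟩⟩ := hne
  haveI : Nonempty Y := ⟨y0⟩
  have hDpos : ∀ u v, 0 < pAUV p a u v := fun u v =>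
    Finset.sum_pos (fun _ _ => hpos _) Finset.univ_nonempty
  set M : ℝ := ∑ o, |S o| with hM
  have hM0 : 0 ≤ M := Finset.sum_nonneg fun _ _ => abs_nonneg _
  refine ⟨(1 + M)⁻¹, by positivity, fun t ht => ⟨fun o => ?_, ?_⟩, ?_⟩
  · have h1 : |S o| ≤ M := Finset.single_le_sum (f := fun o => |S o|)
      (fun _ _ => abs_nonneg _) (Finset.mem_univ o)
    have h2 : |t * S o| < 1 := by
      rw [abs_mul]
      calc |t| * |S o| ≤ |t| * M :=
            mul_le_mul_of_nonneg_left h1 (abs_nonneg t)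
        _ < (1 + M)⁻¹ * (1 + M) :=
            mul_lt_mul' (le_of_lt ht) (by linarith) hM0 (by positivity)
        _ = 1 := by field_simp
    have h3 := neg_lt_of_abs_lt h2
    have h4 : 0 < 1 + t * S o := by linarith
    exact mul_pos (hpos o) h4
  · have e : ∀ o : Y × A × U × V, p o * (1 + t * S o) = p o + t * (p o * S o) :=
      fun o => by ring
    simp only [e, Finset.sum_add_distrib, ← Finset.mul_sum, hsum, hS, mul_zero,
      add_zero]
  · have hDne : ∀ u v, pAUV p a u v ≠ 0 := fun u v => (hDpos u v).ne'
    have key : (fun t : ℝ => Ta (fun o => p o * (1 + t * S o)) a)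
        = fun t : ℝ => ∑ u : U, (pU p u + t * pU (fun o => p o * S o) u) *
            ∑ v : V, (pV p v + t * pV (fun o => p o * S o) v) *
              ((nm p a u v + t * nm (fun o => p o * S o) a u v) /
                (pAUV p a u v + t * pAUV (fun o => p o * S o) a u v)) := by
      funext t
      simp only [Ta, mReg_eq, pU_lin, pV_lin, pAUV_lin, nm_lin]
    rw [key, deriv_identity p S a hDne hS]
    exact hasDerivAt_F _ _ _ _ _ _ _ _ hDne

end
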